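/- Let $\alpha, \beta$ be integers with $\alpha$ odd such that $p = \alpha^2 + \beta^2$ is a prime with $p \equiv 1 \pmod 4$. Then the Legendre symbol $\left(\frac{\alpha}{p}\right)$ equals $1$. -/

import Mathlib

open scoped NumberTheorySymbols

/-- If `α` is odd and `p = α² + β²` is a prime `≡ 1 (mod 4)`, then the Legendre
symbol `(α / p)` equals `1`. -/
theorem stmt14 (p : ℕ) [Fact p.Prime] (hp1 : p % 4 = 1) (α β : ℤ) (hα : Odd α)
    (hsum : (p : ℤ) = α ^ 2 + β ^ 2) :
    legendreSym p α = 1 := by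
  have hp : p.Prime := Fact.out
  set a : ℕ := α.natAbs with ha_def
  have ha_odd : Odd a := Int.natAbs_odd.mpr hα
  -- coprimality of α and β
  have hg : Int.gcd α β = 1 := by
    set g := Int.gcd α β with hg_def
    have h1 : (g : ℤ) ∣ α := Int.gcd_dvd_left α β
    have h2 : (g : ℤ) ∣ β := Int.gcd_dvd_right α β
    have hdvd : ((g ^ 2 : ℕ) : ℤ) ∣ (p : ℤ) := by
      rw [hsum]
      push_cast
      exact dvd_add (pow_dvd_pow_of_dvd h1 2) (pow_dvd_pow_of_dvd h2 2)
    have hdvd' : g ^ 2 ∣ p := Int.ofNat_dvd.mp hdvd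
    rcases (hp.eq_one_or_self_of_dvd g (dvd_trans (dvd_pow_self g two_ne_zero) hdvd')) with h | h
    · exact h
    · exfalso
      rw [h] at hdvd'
      have : p * p ∣ p := by simpa [sq] using hdvd'
      have hle := Nat.le_of_dvd hp.pos this
      nlinarith [hp.two_le]
  -- Jacobi symbol computation
  have hβa : Int.gcd β (a : ℤ) = 1 := by
    have h1 : Int.gcd β α = 1 := by rw [Int.gcd_comm]; exact hg
    rw [ha_def]
    simpa [Int.gcd, Int.natAbs_abs] using h1
  have key : J((p : ℤ) | a) = 1 := by
    have hda : (a : ℤ) ∣ α ^ 2 := by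
      have h2 : ((α.natAbs * α.natAbs : ℕ) : ℤ) = α * α := Int.natAbs_mul_self
      have : α ^ 2 = (a : ℤ) * a := by rw [ha_def, sq]; push_cast at h2 ⊢; omega
      rw [this]; exact Dvd.intro _ rfl
    have hmod : ((p : ℤ)) % a = (β ^ 2) % a := by
      have : (a : ℤ) ∣ β ^ 2 - (p : ℤ) := by
        rw [hsum]
        have : β ^ 2 - (α ^ 2 + β ^ 2) = -(α ^ 2) := by ring
        rw [this]
        exact dvd_neg.mpr hda
      exact Int.modEq_iff_dvd.mpr this
    rw [jacobiSym.mod_left, hmod, ← jacobiSym.mod_left]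
    exact jacobiSym.sq_one' hβa
  have hrecip : J((a : ℤ) | p) = 1 := by
    rw [← jacobiSym.quadratic_reciprocity_one_mod_four hp1 ha_odd]
    exact key
  rw [jacobiSym.legendreSym.to_jacobiSym]
  rcases Int.natAbs_eq α with h | h
  · rw [h]; exact hrecip
  · rw [h, jacobiSym.neg _ (Nat.odd_iff.mpr (Nat.odd_of_mod_four_eq_one hp1)),
      ZMod.χ₄_nat_one_mod_four hp1, one_mul]
    exact hrecip
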